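/- arXiv:2302.11356 — 3 statements merged into one kernel-verified Lean document; each statement's English description precedes it below -/
import Mathlib

section
/- Proposition 3 (TBD-PHD updater): with the unnormalized posterior weights w_n and evidence Z = Σ_{n≥0} (1/n!) ∫_{α^n} w_n dμ^n, define the posterior intensity function v_post(x) = (1/Z) · Σ_{n=1}^{∞} (1/(n−1)!) ∫_{α^{n−1}} w_n(x, y₁, …, y_{n−1}) dμ^{n−1}(y₁,…,y_{n−1}). Then for every x ∈ α, v_post(x) = L(x) · λ · π(x); that is, the updated intensity function equals the likelihood ratio times the predicted intensity, v_{k+1}(x) = 𝕃(Z_{k+1}|x) · v_{k+1|k}(x), with no clutter or detection-probability terms. -/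
open scoped BigOperators
open MeasureTheory

/-- **Proposition 3 (TBD-PHD updater).**
With the unnormalized posterior weights
`w_n(x₁,…,x_n) = exp(−λ) · λ^n · ∏_i L(x_i)·π(x_i)` and evidence
`Z = Σ_{n≥0} (1/n!) ∫_{α^n} w_n dμ^n`, define the posterior intensity
`v_post(x) = (1/Z) · Σ_{n=1}^∞ (1/(n−1)!) ∫_{α^{n−1}} w_n(x, y₁,…,y_{n−1}) dμ^{n−1}`
(the sum over `n ≥ 1` is written via the substitution `n = m + 1`).
Then for every `x ∈ α`, `v_post(x) = L(x) · λ · π(x)`: the updated intensity equals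
the likelihood ratio times the predicted intensity, with no clutter or
detection-probability terms. -/
theorem tbd_phd_updater_intensity
    {α : Type*} [MeasurableSpace α] (μ : Measure α) [SigmaFinite μ]
    (p L : α → ℝ) (hp_meas : Measurable p) (hL_meas : Measurable L)
    (hp_nn : ∀ x, 0 ≤ p x) (hL_nn : ∀ x, 0 ≤ L x)
    (hp_dens : ∫ x, p x ∂μ = 1)
    (l : ℝ) (hl : 0 ≤ l)
    (hLp_int : Integrable (fun x => L x * p x) μ)
    (a : ℝ) (ha : a = l * ∫ x, L x * p x ∂μ)
    (w : (n : ℕ) → (Fin n → α) → ℝ)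
    (hw : ∀ n (x : Fin n → α), w n x = Real.exp (-l) * l ^ n * ∏ i, L (x i) * p (x i))
    (Z : ℝ)
    (hZ : Z = ∑' n : ℕ, (1 / n.factorial : ℝ) *
        ∫ x : Fin n → α, w n x ∂(Measure.pi fun _ : Fin n => μ))
    (vpost : α → ℝ)
    (hv : ∀ x : α, vpost x = (1 / Z) * ∑' m : ℕ, (1 / m.factorial : ℝ) *
        ∫ y : Fin m → α, w (m + 1) (Fin.cons x y) ∂(Measure.pi fun _ : Fin m => μ)) :
    ∀ x : α, vpost x = L x * (l * p x) := by
  letI : MeasureSpace α := ⟨μ⟩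
  set I : ℝ := ∫ x, L x * p x ∂μ with hI
  -- key product-integral computation
  have hprod : ∀ n : ℕ, (∫ x : Fin n → α, ∏ i, L (x i) * p (x i)
      ∂(Measure.pi fun _ : Fin n => μ)) = I ^ n := by
    intro n
    have := MeasureTheory.integral_fintype_prod_eq_pow (𝕜 := ℝ) (ι := Fin n)
      (fun x => L x * p x) (μ := μ)
    simpa [MeasureTheory.volume_pi, Fintype.card_fin] using this
  have hint : ∀ n : ℕ, (∫ x : Fin n → α, w n x ∂(Measure.pi fun _ : Fin n => μ))
      = Real.exp (-l) * l ^ n * I ^ n := by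
    intro n
    simp_rw [hw]
    rw [MeasureTheory.integral_const_mul, hprod]
  -- exponential series
  have hexp : ∀ c : ℝ, (∑' n : ℕ, (1 / n.factorial : ℝ) * c ^ n) = Real.exp c := by
    intro c
    rw [Real.exp_eq_exp_ℝ, NormedSpace.exp_eq_tsum_div]
    exact tsum_congr fun n => by rw [one_div, inv_mul_eq_div]
  have hZval : Z = Real.exp (-l) * Real.exp (l * I) := by
    rw [hZ]
    have : ∀ n : ℕ, (1 / n.factorial : ℝ) *
        (∫ x : Fin n → α, w n x ∂(Measure.pi fun _ : Fin n => μ))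
        = Real.exp (-l) * ((1 / n.factorial : ℝ) * (l * I) ^ n) := by
      intro n; rw [hint n, mul_pow]; ring
    simp_rw [this]
    rw [tsum_mul_left, hexp]
  intro x
  have hnum : ∀ m : ℕ, (∫ y : Fin m → α, w (m + 1) (Fin.cons x y)
      ∂(Measure.pi fun _ : Fin m => μ))
      = Real.exp (-l) * l ^ (m + 1) * (L x * p x) * I ^ m := by
    intro m
    have h1 : ∀ y : Fin m → α, w (m + 1) (Fin.cons x y)
        = Real.exp (-l) * l ^ (m + 1) * (L x * p x) * ∏ i, L (y i) * p (y i) := by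
      intro y
      rw [hw]
      rw [Fin.prod_univ_succ]
      simp [mul_assoc]
    simp_rw [h1]
    rw [MeasureTheory.integral_const_mul, hprod]
  have hsum : (∑' m : ℕ, (1 / m.factorial : ℝ) *
      ∫ y : Fin m → α, w (m + 1) (Fin.cons x y) ∂(Measure.pi fun _ : Fin m => μ))
      = Real.exp (-l) * l * (L x * p x) * Real.exp (l * I) := by
    have : ∀ m : ℕ, (1 / m.factorial : ℝ) *
        (∫ y : Fin m → α, w (m + 1) (Fin.cons x y) ∂(Measure.pi fun _ : Fin m => μ))
        = (Real.exp (-l) * l * (L x * p x)) * ((1 / m.factorial : ℝ) * (l * I) ^ m) := by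
      intro m; rw [hnum m]; rw [pow_succ, mul_pow]; ring
    simp_rw [this]
    rw [tsum_mul_left, hexp]
  rw [hv, hsum, hZval]
  have h1 : Real.exp (-l) ≠ 0 := Real.exp_ne_zero _
  have h2 : Real.exp (l * I) ≠ 0 := Real.exp_ne_zero _
  field_simp
end

section
/- Proposition 4 (updated cardinality distribution of the TBD-PHD filter): with the unnormalized posterior weights w_n and evidence Z = Σ_{m≥0} (1/m!) ∫_{α^m} w_m dμ^m, define the posterior cardinality distribution ρ_post(n) = (1/Z) · (1/n!) ∫_{α^n} w_n dμ^n. Then for every n ∈ ℕ, ρ_post(n) = exp(−a) · a^n / n! where a = λ ∫_α L·π dμ = ⟨𝕃(Z_{k+1}|·), v_{k+1|k}(·)⟩; that is, the posterior cardinality distribution is Poisson with parameter ⟨L, v⟩, so the Poisson prior cardinality distribution is conjugate to any separable likelihood. -/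
open scoped BigOperators
open MeasureTheory

lemma exp_tsum_aux (a : ℝ) : (∑' n : ℕ, a ^ n / n.factorial) = Real.exp a := by
  rw [Real.exp_eq_exp_ℝ, NormedSpace.exp_eq_tsum ℝ]
  congr 1; ext n
  rw [smul_eq_mul, div_eq_inv_mul]


/-- **Proposition 4 (updated cardinality distribution of the TBD-PHD filter).**
With the unnormalized posterior weights
`w_n(x₁,…,x_n) = exp(−λ) · λ^n · ∏_i L(x_i)·π(x_i)` and evidence
`Z = Σ_{m≥0} (1/m!) ∫_{α^m} w_m dμ^m`, define the posterior cardinality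
distribution `ρ_post(n) = (1/Z) · (1/n!) ∫_{α^n} w_n dμ^n`.  Then for every `n`,
`ρ_post(n) = exp(−a) · a^n / n!` where `a = λ ∫ L·π dμ = ⟨L, v⟩`: the posterior
cardinality distribution is Poisson with parameter `⟨L, v⟩`, so the Poisson prior
cardinality distribution is conjugate to any separable likelihood. -/
theorem tbd_phd_updated_cardinality
    {α : Type*} [MeasurableSpace α] (μ : Measure α) [SigmaFinite μ]
    (p L : α → ℝ) (hp_meas : Measurable p) (hL_meas : Measurable L)
    (hp_nn : ∀ x, 0 ≤ p x) (hL_nn : ∀ x, 0 ≤ L x)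
    (hp_dens : ∫ x, p x ∂μ = 1)
    (l : ℝ) (hl : 0 ≤ l)
    (hLp_int : Integrable (fun x => L x * p x) μ)
    (a : ℝ) (ha : a = l * ∫ x, L x * p x ∂μ)
    (w : (n : ℕ) → (Fin n → α) → ℝ)
    (hw : ∀ n (x : Fin n → α), w n x = Real.exp (-l) * l ^ n * ∏ i, L (x i) * p (x i))
    (Z : ℝ)
    (hZ : Z = ∑' m : ℕ, (1 / m.factorial : ℝ) *
        ∫ x : Fin m → α, w m x ∂(Measure.pi fun _ : Fin m => μ))
    (ρpost : ℕ → ℝ)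
    (hρ : ∀ n : ℕ, ρpost n = (1 / Z) * ((1 / n.factorial : ℝ) *
        ∫ x : Fin n → α, w n x ∂(Measure.pi fun _ : Fin n => μ))) :
    ∀ n : ℕ, ρpost n = Real.exp (-a) * a ^ n / n.factorial := by
  letI : MeasureSpace α := ⟨μ⟩
  set I := ∫ x, L x * p x ∂μ with hI
  have key : ∀ n : ℕ, (∫ x : Fin n → α, w n x ∂(Measure.pi fun _ : Fin n => μ))
      = Real.exp (-l) * a ^ n := by
    intro n
    have : (Measure.pi fun _ : Fin n => μ) = (volume : Measure (Fin n → α)) := by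
      rw [volume_pi]; rfl
    rw [this]
    simp_rw [hw]
    rw [integral_const_mul, MeasureTheory.integral_fintype_prod_volume_eq_pow (ι := Fin n)
        (fun x => L x * p x)]
    simp only [ha, mul_pow, Fintype.card_fin, mul_assoc]
    congr 1
  have hZ' : Z = Real.exp (-l) * Real.exp a := by
    rw [hZ]
    have : ∀ m : ℕ, (1 / m.factorial : ℝ) *
        ∫ x : Fin m → α, w m x ∂(Measure.pi fun _ : Fin m => μ)
        = Real.exp (-l) * (a ^ m / m.factorial) := by
      intro m; rw [key m]; ring
    simp_rw [this]
    rw [tsum_mul_left, exp_tsum_aux]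
  intro n
  rw [hρ n, key n, hZ', Real.exp_neg a]
  have h1 : Real.exp (-l) ≠ 0 := Real.exp_ne_zero _
  have h2 : Real.exp a ≠ 0 := Real.exp_ne_zero _
  have h3 : (n.factorial : ℝ) ≠ 0 := Nat.cast_ne_zero.mpr n.factorial_ne_zero
  field_simp
end

section
/- Poisson conjugacy of the full posterior multi-target density: with the unnormalized posterior weights w_n and evidence Z = Σ_{m≥0} (1/m!) ∫_{α^m} w_m dμ^m, for every n ∈ ℕ and every (x₁,…,x_n) ∈ α^n one has w_n(x₁,…,x_n)/Z = exp(−a) · ∏_{i=1}^{n} ( λ · L(x_i) · π(x_i) ), where a = λ ∫_α L·π dμ. That is, the normalized posterior multi-target density is exactly the density of a Poisson random finite set with intensity function x ↦ L(x)·λ·π(x): the Poisson prior is conjugate under the separable TBD likelihood, and the posterior is again Poisson with intensity L·v. -/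
open scoped BigOperators
open MeasureTheory

/-- **Poisson conjugacy of the full posterior multi-target density.**
With the unnormalized posterior weights
`w_n(x₁,…,x_n) = exp(−λ) · λ^n · ∏_i L(x_i)·π(x_i)` and evidence
`Z = Σ_{m≥0} (1/m!) ∫_{α^m} w_m dμ^m`, for every `n ∈ ℕ` and every
`(x₁,…,x_n) ∈ α^n` one has
`w_n(x₁,…,x_n)/Z = exp(−a) · ∏_{i=1}^{n} ( λ · L(x_i) · p(x_i) )`,
where `a = λ ∫ L·π dμ`.  That is, the normalized posterior multi-target density is
exactly the density of a Poisson random finite set with intensity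
`x ↦ L(x)·λ·π(x)`: the posterior is again Poisson with intensity `L·v`. -/
theorem tbd_phd_posterior_poisson
    {α : Type*} [MeasurableSpace α] (μ : Measure α) [SigmaFinite μ]
    (p L : α → ℝ) (hp_meas : Measurable p) (hL_meas : Measurable L)
    (hp_nn : ∀ x, 0 ≤ p x) (hL_nn : ∀ x, 0 ≤ L x)
    (hp_dens : ∫ x, p x ∂μ = 1)
    (l : ℝ) (hl : 0 ≤ l)
    (hLp_int : Integrable (fun x => L x * p x) μ)
    (a : ℝ) (ha : a = l * ∫ x, L x * p x ∂μ)
    (w : (n : ℕ) → (Fin n → α) → ℝ)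
    (hw : ∀ n (x : Fin n → α), w n x = Real.exp (-l) * l ^ n * ∏ i, L (x i) * p (x i))
    (Z : ℝ)
    (hZ : Z = ∑' m : ℕ, (1 / m.factorial : ℝ) *
        ∫ x : Fin m → α, w m x ∂(Measure.pi fun _ : Fin m => μ)) :
    ∀ (n : ℕ) (x : Fin n → α),
      w n x / Z = Real.exp (-a) * ∏ i, l * L (x i) * p (x i) := by
  letI : MeasureSpace α := ⟨μ⟩
  set c : ℝ := ∫ x, L x * p x ∂μ with hc
  have hint : ∀ m : ℕ,
      (∫ x : Fin m → α, w m x ∂(Measure.pi fun _ : Fin m => μ)) =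
        Real.exp (-l) * l ^ m * c ^ m := by
    intro m
    have : (Measure.pi fun _ : Fin m => μ) = (volume : Measure (Fin m → α)) := by
      simp [volume_pi]; rfl
    rw [this]
    simp only [hw]
    rw [MeasureTheory.integral_const_mul]
    congr 1
    have := MeasureTheory.integral_fin_nat_prod_eq_prod
      (E := fun _ : Fin m => α) (μ := fun _ => (volume : Measure α)) (fun _ x => L x * p x)
    erw [this]
    simp [hc]
    rfl
  have hZval : Z = Real.exp (-l) * Real.exp a := by
    rw [hZ]
    have : ∀ m : ℕ, (1 / m.factorial : ℝ) *
        (∫ x : Fin m → α, w m x ∂(Measure.pi fun _ : Fin m => μ)) =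
        Real.exp (-l) * (a ^ m / m.factorial) := by
      intro m
      rw [hint m, ha]
      ring
    simp only [this]
    rw [tsum_mul_left]
    congr 1
    rw [Real.exp_eq_exp_ℝ, NormedSpace.exp_eq_tsum_div]
  intro n x
  rw [hw, hZval]
  have hZpos : Real.exp (-l) * Real.exp a ≠ 0 := by positivity
  field_simp
  simp only [Finset.prod_mul_distrib, Finset.prod_const, Finset.card_univ, Fintype.card_fin,
    Real.exp_neg a]
  have := Real.exp_ne_zero a
  field_simp
end
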